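/- Let a, b, c, d be integers with ad − bc = ±1 and abcd ≠ 0, and suppose b is odd. Let π be the group with presentation ⟨u, v, y | uyu⁻¹ = y⁻¹, v² = u^{2a} y^{b}, v u^{2c} y^{d} v⁻¹ = u^{−2c} y^{−d}⟩. Then the abelianization of π is isomorphic to ℤ/4|c|ℤ ⊕ ℤ/4ℤ, with the two summands generated by the images of u and of u^{−a}v respectively. -/

import Mathlib

/-- The relators of `π = ⟨u, v, y | uyu⁻¹ = y⁻¹, v² = u^{2a} y^{b},
v u^{2c} y^{d} v⁻¹ = u^{−2c} y^{−d}⟩`, with generators `u = 0`, `v = 1`, `y = 2`. -/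
def solRels (a b c d : ℤ) : Set (FreeGroup (Fin 3)) :=
  { FreeGroup.of 0 * FreeGroup.of 2 * (FreeGroup.of 0)⁻¹ * FreeGroup.of 2,
    ((FreeGroup.of 1) ^ 2)⁻¹ * (FreeGroup.of 0) ^ (2 * a) * (FreeGroup.of 2) ^ b,
    (FreeGroup.of 1 * ((FreeGroup.of 0) ^ (2 * c) * (FreeGroup.of 2) ^ d) *
        (FreeGroup.of 1)⁻¹) * ((FreeGroup.of 0) ^ (2 * c) * (FreeGroup.of 2) ^ d) }

namespace Stmt17Aux

variable (a b c d : ℤ)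

/-- Images of the generators in the target group. -/
def fgen : Fin 3 → Multiplicative (ZMod (4 * c.natAbs) × ZMod 4) :=
  ![Multiplicative.ofAdd ((1 : ZMod (4 * c.natAbs)), (0 : ZMod 4)),
    Multiplicative.ofAdd (((a : ZMod (4 * c.natAbs))), (1 : ZMod 4)),
    Multiplicative.ofAdd ((0 : ZMod (4 * c.natAbs)), (2 : ZMod 4))]

lemma four_c_cast : ((4 * c : ℤ) : ZMod (4 * c.natAbs)) = 0 := by
  rw [ZMod.intCast_zmod_eq_zero_iff_dvd]
  push_cast
  rcases abs_choice c with h | h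
  · exact ⟨1, by rw [h]; ring⟩
  · exact ⟨-1, by rw [h]; ring⟩

lemma lift_rels (hb : Odd b) :
    ∀ r ∈ solRels a b c d, FreeGroup.lift (fgen a c) r = 1 := by
  obtain ⟨k, hk⟩ := hb
  have h4 : ((4 : ℤ) : ZMod 4) = 0 := by decide
  have hc := four_c_cast c
  push_cast at hc
  rintro r (rfl | rfl | rfl) <;>
    simp only [map_mul, map_inv, map_zpow, map_pow, FreeGroup.lift_apply_of, fgen,
      Matrix.cons_val_zero, Matrix.cons_val_one, Matrix.head_cons, Matrix.cons_val_two,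
      Matrix.tail_cons, ← ofAdd_neg, ← ofAdd_add, ← ofAdd_zsmul, ← ofAdd_nsmul,
      ← ofAdd_zero (α := ZMod (4 * Int.natAbs c) × ZMod 4)] <;>
    congr 1 <;>
    refine Prod.ext ?_ ?_ <;>
    simp only [Prod.fst_add, Prod.snd_add, Prod.smul_fst, Prod.smul_snd, Prod.fst_neg,
      Prod.snd_neg, Prod.fst_zero, Prod.snd_zero, smul_zero, neg_zero, add_zero, zero_add] <;>
    (try simp only [zsmul_eq_mul, nsmul_eq_mul, mul_one, mul_zero, Nat.cast_ofNat])
  · ring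
  · decide
  · push_cast; ring
  · subst hk
    push_cast
    linear_combination (k : ZMod 4) * h4
  · push_cast
    linear_combination hc
  · push_cast
    linear_combination (d : ZMod 4) * h4

section Rels

variable (a b c d : ℤ)

abbrev A (a b c d : ℤ) := Abelianization (PresentedGroup (solRels a b c d))

/-- The canonical map from the free group to the abelianization. -/
def q : FreeGroup (Fin 3) →* A a b c d :=
  (Abelianization.of).comp (QuotientGroup.mk' (Subgroup.normalClosure (solRels a b c d)))

lemma q_rel {r : FreeGroup (Fin 3)} (hr : r ∈ solRels a b c d) : q a b c d r = 1 := by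
  show Abelianization.of ((QuotientGroup.mk' _) r) = 1
  have h : (QuotientGroup.mk' (Subgroup.normalClosure (solRels a b c d))) r = 1 :=
    (QuotientGroup.eq_one_iff r).2 (Subgroup.subset_normalClosure hr)
  exact (congrArg (Abelianization.of (G := PresentedGroup (solRels a b c d))) h).trans (map_one _)

lemma q_of (i : Fin 3) :
    q a b c d (FreeGroup.of i) = Abelianization.of (PresentedGroup.of (rels := solRels a b c d) i) := rfl

local notation "U" => q a b c d (FreeGroup.of 0)
local notation "V" => q a b c d (FreeGroup.of 1)
local notation "Y" => q a b c d (FreeGroup.of 2)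

lemma rel1 : Y ^ 2 = 1 := by
  have h := q_rel a b c d (Set.mem_insert _ _)
  simp only [map_mul, map_inv] at h
  calc Y ^ 2 = U * Y * U⁻¹ * Y := by
        rw [sq, mul_right_comm U Y U⁻¹, mul_inv_cancel, one_mul]
  _ = 1 := h

lemma rel2 : V ^ 2 = U ^ (2 * a) * Y ^ b := by
  have h := q_rel a b c d (Set.mem_insert_of_mem _ (Set.mem_insert _ _))
  simp only [map_mul, map_inv, map_pow, map_zpow] at h
  rw [mul_assoc, inv_mul_eq_one] at h
  exact h

lemma rel3 : U ^ (4 * c) * Y ^ (2 * d) = 1 := by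
  have h := q_rel a b c d (Set.mem_insert_of_mem _ (Set.mem_insert_of_mem _ rfl))
  simp only [map_mul, map_inv, map_pow, map_zpow] at h
  rw [mul_right_comm V (U ^ (2*c) * Y ^ d) V⁻¹, mul_inv_cancel, one_mul, ← sq] at h
  rw [mul_pow, ← zpow_natCast (U ^ (2*c)) 2, ← zpow_natCast (Y ^ d) 2, ← zpow_mul, ← zpow_mul] at h
  rw [show (4 * c : ℤ) = 2 * c * 2 by ring, show (2 * d : ℤ) = d * 2 by ring]
  exact h

lemma relY2 : Y ^ (2 : ℤ) = 1 := by
  rw [show (2:ℤ) = ((2:ℕ):ℤ) from rfl, zpow_natCast]; exact rel1 a b c d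

lemma relU : U ^ ((4 * c.natAbs : ℕ)) = 1 := by
  have h3 := rel3 a b c d
  have hY : Y ^ (2 * d) = 1 := by
    rw [zpow_mul, relY2, one_zpow]
  rw [hY, mul_one] at h3
  rw [← zpow_natCast]
  rcases abs_choice c with h | h
  · rw [show ((4 * c.natAbs : ℕ) : ℤ) = 4 * c by push_cast; rw [h]]
    exact h3
  · rw [show ((4 * c.natAbs : ℕ) : ℤ) = -(4 * c) by push_cast; rw [h]; ring]
    rw [zpow_neg, h3, inv_one]

lemma relY (hb : Odd b) : Y = U ^ (-(2 * a)) * V ^ 2 := by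
  obtain ⟨k, hk⟩ := hb
  have h2 := rel2 a b c d
  have hYb : Y ^ b = Y := by
    rw [hk, zpow_add, zpow_mul, relY2, one_zpow, one_mul, zpow_one]
  rw [hYb] at h2
  rw [h2, zpow_neg, inv_mul_cancel_left]

lemma relW2 (hb : Odd b) : (U ^ (-a) * V) ^ 2 = Y := by
  rw [mul_pow, ← zpow_natCast (U ^ (-a)) 2, ← zpow_mul, relY a b c d hb]
  norm_num
  rw [mul_comm]

lemma relW4 (hb : Odd b) : (U ^ (-a) * V) ^ 4 = 1 := by
  rw [show (4:ℕ) = 2 * 2 from rfl, pow_mul, relW2 a b c d hb, rel1]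

end Rels

section Equiv

variable (a b c d : ℤ) (hb : Odd b)

local notation "U" => q a b c d (FreeGroup.of 0)
local notation "V" => q a b c d (FreeGroup.of 1)
local notation "W" => (q a b c d (FreeGroup.of 0)) ^ (-a) * q a b c d (FreeGroup.of 1)
local notation "Y" => q a b c d (FreeGroup.of 2)

noncomputable def Phi : A a b c d →* Multiplicative (ZMod (4 * c.natAbs) × ZMod 4) :=
  Abelianization.lift (PresentedGroup.toGroup (lift_rels a b c d hb))

lemma Phi_of (i : Fin 3) :
    Phi a b c d hb (Abelianization.of (PresentedGroup.of i)) = fgen a c i := by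
  simp [Phi, Abelianization.lift_apply_of, PresentedGroup.toGroup.of]

noncomputable def Psi : Multiplicative (ZMod (4 * c.natAbs) × ZMod 4) →* A a b c d :=
  (MulEquiv.multiplicativeAdditive (A a b c d)).toMonoidHom.comp
    (AddMonoidHom.toMultiplicative
      ((ZMod.lift (4 * c.natAbs) ⟨zmultiplesHom _ (Additive.ofMul U), by
          simp only [zmultiplesHom_apply, ← ofMul_zpow, zpow_natCast, relU]
          rfl⟩).coprod
       (ZMod.lift 4 ⟨zmultiplesHom _ (Additive.ofMul W), by
          simp only [zmultiplesHom_apply, ← ofMul_zpow, zpow_natCast, relW4 a b c d hb]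
          rfl⟩)))

lemma Psi_apply (x y : ℤ) :
    Psi a b c d hb (Multiplicative.ofAdd ((x : ZMod (4 * c.natAbs)), (y : ZMod 4))) =
      U ^ x * W ^ y := by
  simp only [Psi, MonoidHom.comp_apply, MulEquiv.coe_toMonoidHom,
    AddMonoidHom.toMultiplicative_apply_apply, toAdd_ofAdd, AddMonoidHom.coprod_apply,
    ZMod.lift_coe, zmultiplesHom_apply, MulEquiv.multiplicativeAdditive_apply]
  rw [← ofMul_zpow, ← ofMul_zpow, ← ofMul_mul]
  rfl

lemma Phi_U : Phi a b c d hb (q a b c d (FreeGroup.of 0)) =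
    Multiplicative.ofAdd ((1 : ZMod (4 * c.natAbs)), (0 : ZMod 4)) := Phi_of a b c d hb 0

lemma Phi_V : Phi a b c d hb (q a b c d (FreeGroup.of 1)) =
    Multiplicative.ofAdd (((a : ZMod (4 * c.natAbs))), (1 : ZMod 4)) := Phi_of a b c d hb 1

lemma Phi_UW (x y : ℤ) :
    Phi a b c d hb (U ^ x * W ^ y) =
      Multiplicative.ofAdd (((x : ZMod (4 * c.natAbs))), ((y : ZMod 4))) := by
  rw [map_mul, map_zpow, map_zpow, map_mul, map_zpow, Phi_U, Phi_V,
    ← ofAdd_zsmul, ← ofAdd_zsmul, ← ofAdd_add, ← ofAdd_zsmul, ← ofAdd_add]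
  congr 1
  refine Prod.ext ?_ ?_ <;>
    simp [zsmul_eq_mul]

lemma Phi_W : Phi a b c d hb W =
    Multiplicative.ofAdd ((0 : ZMod (4 * c.natAbs)), (1 : ZMod 4)) := by
  have := Phi_UW a b c d hb 0 1
  rw [zpow_zero, one_mul, zpow_one] at this
  rw [this]
  norm_num

lemma left_inv : Function.LeftInverse (Psi a b c d hb) (Phi a b c d hb) := by
  have key : (Psi a b c d hb).comp (Phi a b c d hb) = MonoidHom.id _ := by
    apply Abelianization.hom_ext
    apply PresentedGroup.ext
    intro i
    fin_cases i
    · show Psi a b c d hb (Phi a b c d hb (q a b c d (FreeGroup.of 0))) = q a b c d (FreeGroup.of 0)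
      rw [Phi_U, show ((1 : ZMod (4 * c.natAbs)), (0 : ZMod 4)) =
        (((1:ℤ) : ZMod (4 * c.natAbs)), ((0:ℤ) : ZMod 4)) by norm_num, Psi_apply]
      rw [zpow_one, zpow_zero, mul_one]
    · show Psi a b c d hb (Phi a b c d hb (q a b c d (FreeGroup.of 1))) = q a b c d (FreeGroup.of 1)
      rw [Phi_V, show (((a : ZMod (4 * c.natAbs))), (1 : ZMod 4)) =
        (((a:ℤ) : ZMod (4 * c.natAbs)), ((1:ℤ) : ZMod 4)) by norm_num, Psi_apply]
      rw [zpow_one, zpow_neg, mul_inv_cancel_left]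
    · show Psi a b c d hb (Phi a b c d hb (q a b c d (FreeGroup.of 2))) = q a b c d (FreeGroup.of 2)
      have h2 : Phi a b c d hb (q a b c d (FreeGroup.of 2)) = fgen a c 2 := Phi_of a b c d hb 2
      rw [h2, show fgen a c 2 = Multiplicative.ofAdd
        (((0:ℤ) : ZMod (4 * c.natAbs)), ((2:ℤ) : ZMod 4)) by norm_num [fgen, Matrix.cons_val_two, Matrix.tail_cons, Matrix.head_cons], Psi_apply]
      rw [zpow_zero, one_mul, show (2:ℤ) = ((2:ℕ):ℤ) from rfl, zpow_natCast, relW2 a b c d hb]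
  exact fun g => DFunLike.congr_fun key g

lemma right_inv : Function.RightInverse (Psi a b c d hb) (Phi a b c d hb) := by
  intro g
  obtain ⟨x, hx⟩ := ZMod.intCast_surjective (Multiplicative.toAdd g).1
  obtain ⟨y, hy⟩ := ZMod.intCast_surjective (Multiplicative.toAdd g).2
  have hg : g = Multiplicative.ofAdd ((x : ZMod (4 * c.natAbs)), (y : ZMod 4)) := by
    rw [hx, hy]
    exact (ofAdd_toAdd g).symm
  rw [hg, Psi_apply, Phi_UW]

noncomputable def e : A a b c d ≃* Multiplicative (ZMod (4 * c.natAbs) × ZMod 4) :=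
  MulEquiv.mk' ⟨Phi a b c d hb, Psi a b c d hb, left_inv a b c d hb, right_inv a b c d hb⟩
    (fun x y => map_mul (Phi a b c d hb) x y)

end Equiv

end Stmt17Aux

/-- for `ad − bc = ±1`, `abcd ≠ 0` and `b` odd, the abelianization of
`π = ⟨u, v, y | uyu⁻¹ = y⁻¹, v² = u^{2a}y^{b}, vu^{2c}y^{d}v⁻¹ = u^{−2c}y^{−d}⟩`
is `ℤ/4|c|ℤ ⊕ ℤ/4ℤ`, the summands being generated by the images of `u` and of
`u^{−a}v` respectively. -/
theorem stmt17 (a b c d : ℤ)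
    (hdet : a * d - b * c = 1 ∨ a * d - b * c = -1)
    (h0 : a * b * c * d ≠ 0) (hb : Odd b) :
    ∃ e : Abelianization (PresentedGroup (solRels a b c d)) ≃*
        Multiplicative (ZMod (4 * c.natAbs) × ZMod 4),
      e (Abelianization.of (PresentedGroup.of 0)) =
        Multiplicative.ofAdd ((1 : ZMod (4 * c.natAbs)), (0 : ZMod 4)) ∧
      e (Abelianization.of ((PresentedGroup.of 0) ^ (-a) * PresentedGroup.of 1)) =
        Multiplicative.ofAdd ((0 : ZMod (4 * c.natAbs)), (1 : ZMod 4)) := by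
  refine ⟨Stmt17Aux.e a b c d hb, ?_, ?_⟩
  · exact Stmt17Aux.Phi_U a b c d hb
  · show Stmt17Aux.Phi a b c d hb (Abelianization.of ((PresentedGroup.of 0) ^ (-a) * PresentedGroup.of 1)) = _
    rw [map_mul, map_zpow]
    exact Stmt17Aux.Phi_W a b c d hb
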